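/- Let E and F be vector lattices with F Dedekind complete, s ≥ 2, and let T : E^s → F be an s-linear map of order bounded variation. If T is orthosymmetric, then its modulus |T| (in the Dedekind complete vector lattice of s-linear maps of order bounded variation) is orthosymmetric; consequently, the orthosymmetric s-linear maps of order bounded variation form an ideal. -/

import Mathlib

open scoped BigOperators

/-- `l` is a (finite positive) partition of `x`. -/
def IsPartition {E : Type*} [AddCommMonoid E] [PartialOrder E] (x : E) (l : List E) : Prop :=
  (∀ a ∈ l, 0 ≤ a) ∧ l.sum = x

/-- The partition sum `Σ_{k₁,...,k_s} |T(a₁ₖ₁, ..., a_sₖ_s)|` attached to a tuple of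
partitions. -/
noncomputable def mlPartSum {E F : Type*} [AddCommGroup E] [Lattice E] [Module ℝ E]
    [AddCommGroup F] [Lattice F] [Module ℝ F] {s : ℕ}
    (T : MultilinearMap ℝ (fun _ : Fin s => E) F) (a : Fin s → List E) : F :=
  ∑ k : (∀ i : Fin s, Fin (a i).length), |T (fun i => (a i).get (k i))|

/-- The set of all partition sums of `T` at the positive tuple `x`. -/
def mlSums {E F : Type*} [AddCommGroup E] [Lattice E] [Module ℝ E]
    [AddCommGroup F] [Lattice F] [Module ℝ F] {s : ℕ}
    (T : MultilinearMap ℝ (fun _ : Fin s => E) F) (x : Fin s → E) : Set F :=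
  { y | ∃ a : Fin s → List E, (∀ i, IsPartition (x i) (a i)) ∧ y = mlPartSum T a }

/-- `T` is of order bounded variation. -/
def MlOBV {E F : Type*} [AddCommGroup E] [Lattice E] [Module ℝ E]
    [AddCommGroup F] [Lattice F] [Module ℝ F] {s : ℕ}
    (T : MultilinearMap ℝ (fun _ : Fin s => E) F) : Prop :=
  ∀ x : Fin s → E, (∀ i, 0 ≤ x i) → BddAbove (mlSums T x)

/-- `T` is orthosymmetric. -/
def MlOrthosym {E F : Type*} [AddCommGroup E] [Lattice E] [Module ℝ E]
    [AddCommGroup F] [Lattice F] [Module ℝ F] {s : ℕ}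
    (T : MultilinearMap ℝ (fun _ : Fin s => E) F) : Prop :=
  ∀ v : Fin s → E, (∃ i j, i ≠ j ∧ |v i| ⊓ |v j| = 0) → T v = 0


section Aux

variable {E F : Type*} [AddCommGroup E] [Lattice E]
    [CovariantClass E E (· + ·) (· ≤ ·)] [Module ℝ E]
    [AddCommGroup F] [ConditionallyCompleteLattice F]
    [CovariantClass F F (· + ·) (· ≤ ·)] [Module ℝ F] {s : ℕ}

private lemma aux_sum_nonneg : ∀ {l : List E}, (∀ a ∈ l, 0 ≤ a) → 0 ≤ l.sum := by
  intro l
  induction l with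
  | nil => intro _; simp
  | cons b t ih =>
    intro h
    simp only [List.sum_cons]
    have hb : 0 ≤ b := h b List.mem_cons_self
    have ht : 0 ≤ t.sum := ih fun a ha => h a (List.mem_cons_of_mem _ ha)
    calc (0 : E) ≤ b := hb
    _ = b + 0 := (add_zero _).symm
    _ ≤ b + t.sum := add_le_add_right ht b

private lemma aux_mem_le_sum : ∀ {l : List E}, (∀ a ∈ l, 0 ≤ a) → ∀ a ∈ l, a ≤ l.sum := by
  intro l
  induction l with
  | nil => intro _ a ha; simp at ha
  | cons b t ih =>
    intro h a ha
    simp only [List.sum_cons]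
    have ht : 0 ≤ t.sum := aux_sum_nonneg fun c hc => h c (List.mem_cons_of_mem _ hc)
    rcases List.mem_cons.mp ha with rfl | ha'
    · calc a = a + 0 := (add_zero _).symm
      _ ≤ a + t.sum := add_le_add_right ht a
    · have hb : 0 ≤ b := h b List.mem_cons_self
      calc a ≤ t.sum := ih (fun c hc => h c (List.mem_cons_of_mem _ hc)) a ha'
      _ = t.sum + 0 := (add_zero _).symm
      _ ≤ t.sum + b := add_le_add_right hb _
      _ = b + t.sum := add_comm _ _

/-- Every partition sum of an orthosymmetric map at a disjoint positive tuple is zero. -/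
private lemma aux_sums_zero (T : MultilinearMap ℝ (fun _ : Fin s => E) F)
    (hos : MlOrthosym T) (x : Fin s → E) (hx : ∀ i, 0 ≤ x i)
    {i j : Fin s} (hij : i ≠ j) (hd : x i ⊓ x j = 0) :
    ∀ y ∈ mlSums T x, y = 0 := by
  rintro y ⟨a, ha, rfl⟩
  unfold mlPartSum
  refine Finset.sum_eq_zero fun k _ => ?_
  set v : Fin s → E := fun i' => (a i').get (k i') with hv
  have hvm : ∀ i', v i' ∈ a i' := fun i' => List.get_mem _ _
  have hvpos : ∀ i', 0 ≤ v i' := fun i' => (ha i').1 _ (hvm i')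
  have hvle : ∀ i', v i' ≤ x i' := fun i' => by
    have := aux_mem_le_sum (ha i').1 _ (hvm i')
    rwa [(ha i').2] at this
  have hTv : T v = 0 := by
    refine hos v ⟨i, j, hij, ?_⟩
    rw [abs_of_nonneg (hvpos i), abs_of_nonneg (hvpos j)]
    refine le_antisymm ?_ (le_inf (hvpos i) (hvpos j))
    calc v i ⊓ v j ≤ x i ⊓ x j := inf_le_inf (hvle i) (hvle j)
    _ = 0 := hd
  rw [hTv, abs_zero]

/-- The partition sum of the trivial (singleton) partitions is `|T x|`. -/
private lemma aux_partSum_singleton (T : MultilinearMap ℝ (fun _ : Fin s => E) F)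
    (x : Fin s → E) : mlPartSum T (fun i => [x i]) = |T x| := by
  haveI : Unique (∀ i : Fin s, Fin (((fun i => [x i]) i).length)) :=
    ⟨⟨fun _ => ⟨0, Nat.zero_lt_one⟩⟩,
      fun k => funext fun i => Fin.ext (Nat.lt_one_iff.mp (k i).isLt)⟩
  unfold mlPartSum
  rw [Fintype.sum_unique]
  exact congrArg abs (congrArg T (funext fun i => by simp))

private lemma aux_abs_mem (T : MultilinearMap ℝ (fun _ : Fin s => E) F)
    (x : Fin s → E) (hx : ∀ i, 0 ≤ x i) : |T x| ∈ mlSums T x := by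
  refine ⟨fun i => [x i], fun i => ⟨?_, by simp⟩, (aux_partSum_singleton T x).symm⟩
  intro a ha
  simp only [List.mem_singleton] at ha
  exact ha ▸ hx i

end Aux

/-- If `T` is an orthosymmetric s-linear map of order bounded variation into a Dedekind
complete vector lattice, then its modulus `|T|` (given on positive tuples by the supremum
of partition sums) is orthosymmetric; consequently the orthosymmetric maps of order
bounded variation form an ideal: any `S` of order bounded variation with `|S| ≤ |T|`
is again orthosymmetric. -/
theorem stmt12 {E F : Type*} [AddCommGroup E] [Lattice E]
    [CovariantClass E E (· + ·) (· ≤ ·)] [Module ℝ E]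
    [AddCommGroup F] [ConditionallyCompleteLattice F]
    [CovariantClass F F (· + ·) (· ≤ ·)] [Module ℝ F]
    (s : ℕ) (hs : 2 ≤ s)
    (T : MultilinearMap ℝ (fun _ : Fin s => E) F)
    (hT : MlOBV T) (hos : MlOrthosym T) :
    (∀ x : Fin s → E, (∀ i, 0 ≤ x i) → (∃ i j, i ≠ j ∧ x i ⊓ x j = 0) →
      sSup (mlSums T x) = 0) ∧
    (∀ S : MultilinearMap ℝ (fun _ : Fin s => E) F, MlOBV S →
      (∀ x : Fin s → E, (∀ i, 0 ≤ x i) → sSup (mlSums S x) ≤ sSup (mlSums T x)) →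
      MlOrthosym S) := by
  have part1 : ∀ x : Fin s → E, (∀ i, 0 ≤ x i) → (∃ i j, i ≠ j ∧ x i ⊓ x j = 0) →
      sSup (mlSums T x) = 0 := by
    rintro x hx ⟨i, j, hij, hd⟩
    have hz := aux_sums_zero T hos x hx hij hd
    have hmem : (0 : F) ∈ mlSums T x := by
      have h := aux_abs_mem T x hx
      rwa [hz _ h] at h
    exact le_antisymm (csSup_le ⟨0, hmem⟩ fun y hy => le_of_eq (hz y hy))
      (le_csSup (hT x hx) hmem)
  refine ⟨part1, ?_⟩
  rintro S hSobv hle v ⟨i, j, hij, hd⟩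
  -- S vanishes on positive tuples disjoint in coordinates i, j
  have key : ∀ x : Fin s → E, (∀ i', 0 ≤ x i') → x i ⊓ x j = 0 → S x = 0 := by
    intro x hx hdx
    have hmem := aux_abs_mem S x hx
    have h3 : |S x| ≤ 0 := by
      calc |S x| ≤ sSup (mlSums S x) := le_csSup (hSobv x hx) hmem
      _ ≤ sSup (mlSums T x) := hle x hx
      _ = 0 := part1 x hx ⟨i, j, hij, hdx⟩
    have h4 : S x ≤ 0 := le_trans (le_abs_self _) h3
    have h5 : 0 ≤ S x := neg_nonpos.mp (le_trans (neg_le_abs _) h3)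
    exact le_antisymm h4 h5
  -- expand v into positive and negative parts
  have hv : v = (fun i' => (v i')⁺) + fun i' => -((v i')⁻) := by
    funext i'
    rw [Pi.add_apply, ← sub_eq_add_neg, posPart_sub_negPart]
  rw [hv, MultilinearMap.map_add_univ]
  refine Finset.sum_eq_zero fun t _ => ?_
  have hpiece : t.piecewise (fun i' => (v i')⁺) (fun i' => -((v i')⁻)) =
      fun i' => (if i' ∈ t then (1 : ℝ) else -1) •
        (if i' ∈ t then (v i')⁺ else (v i')⁻) := by
    funext i'
    by_cases h : i' ∈ t <;> simp [Finset.piecewise, h]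
  rw [hpiece, MultilinearMap.map_smul_univ]
  have habs : ∀ a : E, a⁺ ≤ |a| ∧ a⁻ ≤ |a| := fun a =>
    ⟨by rw [posPart_def]; exact sup_le (le_abs_self a) (abs_nonneg a),
     by rw [negPart_def]; exact sup_le (neg_le_abs a) (abs_nonneg a)⟩
  have h0 : S (fun i' => if i' ∈ t then (v i')⁺ else (v i')⁻) = 0 := by
    refine key _ (fun i' => by split <;> [exact posPart_nonneg _; exact negPart_nonneg _]) ?_
    have hle1 : (if i ∈ t then (v i)⁺ else (v i)⁻) ≤ |v i| := by
      split <;> [exact (habs (v i)).1; exact (habs (v i)).2]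
    have hle2 : (if j ∈ t then (v j)⁺ else (v j)⁻) ≤ |v j| := by
      split <;> [exact (habs (v j)).1; exact (habs (v j)).2]
    refine le_antisymm ?_ (le_inf (by split <;> [exact posPart_nonneg _; exact negPart_nonneg _])
      (by split <;> [exact posPart_nonneg _; exact negPart_nonneg _]))
    calc _ ≤ |v i| ⊓ |v j| := inf_le_inf hle1 hle2
    _ = 0 := hd
  rw [h0, smul_zero]
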